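/- Let K be a field of characteristic 0. If P(u,v) is a polynomial in two variables over K satisfying the 2-cocycle condition P(u, v+w) - P(u+v, w) - P(u,v) + P(v,w) = 0 (as polynomials in u,v,w), and P(u,0) = P(0,v) = 0 for all u,v, then there exists a one-variable polynomial Q over K with Q(0) = 0 such that P(u,v) = Q(u+v) - Q(u) - Q(v). -/

import Mathlib

open MvPolynomial

lemma chain2 {K : Type*} [CommRing K] {σ : Type*} [DecidableEq σ]
    (f : Fin 2 → MvPolynomial σ K) (i : σ) (p : MvPolynomial (Fin 2) K) :
    pderiv i (aeval f p) =
      aeval f (pderiv 0 p) * pderiv i (f 0) + aeval f (pderiv 1 p) * pderiv i (f 1) := by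
  induction p using MvPolynomial.induction_on with
  | C a => simp
  | add p q hp hq => simp only [map_add, hp, hq]; ring
  | mul_X p j hp =>
    simp only [map_mul, aeval_X, pderiv_mul, hp]
    fin_cases j <;> simp [pderiv_X, Pi.single_apply] <;> ring

noncomputable def pInteg {K : Type*} [Field K] [CharZero K] (g : Polynomial K) : Polynomial K :=
  g.sum fun n a => Polynomial.C (a / (n + 1)) * Polynomial.X ^ (n + 1)

lemma pInteg_coeff_zero {K : Type*} [Field K] [CharZero K] (g : Polynomial K) :
    (pInteg g).coeff 0 = 0 := by
  rw [pInteg, Polynomial.sum, Polynomial.finset_sum_coeff]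
  apply Finset.sum_eq_zero
  intro n _
  simp [Polynomial.coeff_C_mul, Polynomial.coeff_X_pow]

lemma pInteg_derivative {K : Type*} [Field K] [CharZero K] (g : Polynomial K) :
    Polynomial.derivative (pInteg g) = g := by
  conv_rhs => rw [← Polynomial.sum_C_mul_X_pow_eq g]
  rw [pInteg, Polynomial.sum, map_sum, Polynomial.sum]
  apply Finset.sum_congr rfl
  intro n _
  rw [Polynomial.derivative_C_mul, Polynomial.derivative_X_pow]
  push_cast
  rw [← mul_assoc, ← map_mul]
  have : ((n : K) + 1) ≠ 0 := Nat.cast_add_one_ne_zero n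
  simp [div_mul_cancel₀, this]

lemma coeff_pderiv' {K : Type*} [CommRing K] {σ : Type*} [DecidableEq σ]
    (i : σ) (m : σ →₀ ℕ) (f : MvPolynomial σ K) :
    coeff m (pderiv i f) = (m i + 1) * coeff (m + Finsupp.single i 1) f := by
  induction f using MvPolynomial.induction_on' with
  | add p q hp hq => simp [hp, hq]; ring
  | monomial u a =>
    rw [pderiv_monomial, coeff_monomial, coeff_monomial]
    split_ifs with h1 h2 h3
    · subst h2
      simp [Finsupp.add_apply, Finsupp.single_apply, mul_comm]
    · have hval : ∀ j, u j - (Finsupp.single i 1 : σ →₀ ℕ) j = m j := fun j => by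
        have := DFunLike.congr_fun h1 j
        simpa [Finsupp.tsub_apply] using this
      rcases Nat.eq_zero_or_pos (u i) with h0 | hpos
      · simp [h0]
      · exfalso; apply h2; ext j
        have := hval j
        simp only [Finsupp.single_apply, Finsupp.add_apply] at this ⊢
        by_cases hj : i = j
        · subst hj; simp only [eq_self_iff_true, if_true] at this ⊢; omega
        · simp only [if_neg hj] at this ⊢; omega
    · exfalso; apply h1; subst h3; ext j
      simp only [Finsupp.tsub_apply, Finsupp.add_apply, Finsupp.single_apply]
      by_cases hj : i = j <;> simp [hj]
    · ring

lemma eq_of_pderiv_one_eq_zero {K : Type*} [Field K] [CharZero K]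
    (f : MvPolynomial (Fin 2) K) (h : pderiv 1 f = 0) :
    aeval ![X 0, 0] f = f := by
  have hc : ∀ m : Fin 2 →₀ ℕ, m 1 ≠ 0 → coeff m f = 0 := by
    intro m hm
    have h1 : m = (m - Finsupp.single 1 1) + Finsupp.single 1 1 := by
      ext j
      simp only [Finsupp.add_apply, Finsupp.tsub_apply, Finsupp.single_apply]
      by_cases hj : (1 : Fin 2) = j
      · subst hj; simp only [eq_self_iff_true, if_true]; omega
      · simp only [if_neg hj]; omega
    have hkey := coeff_pderiv' (1 : Fin 2) (m - Finsupp.single 1 1) f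
    rw [h, ← h1] at hkey
    simp only [coeff_zero] at hkey
    have hne : ((((m - Finsupp.single 1 1) : Fin 2 →₀ ℕ) 1 : K) + 1) ≠ 0 :=
      Nat.cast_add_one_ne_zero _
    exact (mul_eq_zero.mp hkey.symm).resolve_left hne
  conv_lhs => rw [f.as_sum]
  rw [map_sum]
  conv_rhs => rw [f.as_sum]
  apply Finset.sum_congr rfl
  intro m hm
  have hm1 : m 1 = 0 := by
    by_contra hne
    exact (mem_support_iff.mp hm) (hc m hne)
  rw [aeval_monomial, monomial_eq, algebraMap_eq]
  congr 1
  apply Finsupp.prod_congr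
  intro j hj
  fin_cases j
  · simp
  · exact absurd hm1 (Finsupp.mem_support_iff.mp hj)

/-- Vanishing of the second symmetric (co-Hochschild) cohomology for polynomials in
one variable: a two-variable polynomial cocycle vanishing on the axes is a coboundary. -/
theorem polynomial_two_cocycle_is_coboundary
    (K : Type*) [Field K] [CharZero K] (P : MvPolynomial (Fin 2) K)
    (hcocycle :
      (aeval ![X 0, X 1 + X 2] P : MvPolynomial (Fin 3) K)
        - aeval ![X 0 + X 1, X 2] P
        - aeval ![X 0, X 1] P
        + aeval ![X 1, X 2] P = 0)
    (hu0 : (aeval ![X 0, 0] P : MvPolynomial (Fin 2) K) = 0)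
    (h0v : (aeval ![0, X 1] P : MvPolynomial (Fin 2) K) = 0) :
    ∃ Q : Polynomial K, Q.coeff 0 = 0 ∧
      P = Polynomial.aeval (X 0 + X 1 : MvPolynomial (Fin 2) K) Q
            - Polynomial.aeval (X 0 : MvPolynomial (Fin 2) K) Q
            - Polynomial.aeval (X 1 : MvPolynomial (Fin 2) K) Q := by
  set D : MvPolynomial (Fin 2) K := pderiv 1 P with hDdef
  -- pderiv facts in Fin 3
  have e0 : pderiv (2:Fin 3) (X 0 : MvPolynomial (Fin 3) K) = 0 := pderiv_X_of_ne (by decide)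
  have e1 : pderiv (2:Fin 3) (X 1 : MvPolynomial (Fin 3) K) = 0 := pderiv_X_of_ne (by decide)
  have e2 : pderiv (2:Fin 3) (X 2 : MvPolynomial (Fin 3) K) = 1 := pderiv_X_self 2
  -- Step 1: differentiate the cocycle w.r.t. the third variable
  have h1 := congrArg (pderiv (2:Fin 3)) hcocycle
  simp only [map_sub, map_add, map_zero] at h1
  rw [chain2 ![X 0, X 1 + X 2] 2 P, chain2 ![X 0 + X 1, X 2] 2 P,
      chain2 ![X 0, X 1] 2 P, chain2 ![X 1, X 2] 2 P] at h1
  simp only [Matrix.cons_val_zero, Matrix.cons_val_one, Matrix.head_cons,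
    map_add, e0, e1, e2, mul_zero, mul_one, zero_add, add_zero, sub_zero] at h1
  -- h1 : aeval ![X0,X1+X2] D - aeval ![X0+X1,X2] D + aeval ![X1,X2] D = 0
  -- Step 2: set the third variable to zero
  have comp1 : ∀ (gf : Fin 2 → MvPolynomial (Fin 3) K) (t : Fin 2 → MvPolynomial (Fin 2) K),
      (∀ i, aeval ![X 0, X 1, 0] (gf i) = t i) →
      aeval (R := K) ![X 0, X 1, 0] (aeval gf D) = aeval t D := by
    intro gf t ht
    rw [comp_aeval_apply]
    exact congrArg (fun u => aeval (R := K) u D) (funext ht)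
  have h2 := congrArg (aeval (R := K) ![X 0, X 1, (0 : MvPolynomial (Fin 2) K)]) h1
  simp only [map_sub, map_add, map_zero] at h2
  rw [comp1 ![X 0, X 1 + X 2] ![X 0, X 1] (by intro i; fin_cases i <;> simp),
      comp1 ![X 0 + X 1, X 2] ![X 0 + X 1, 0] (by intro i; fin_cases i <;> simp),
      comp1 ![X 1, X 2] ![X 1, 0] (by intro i; fin_cases i <;> simp)] at h2
  have hXid : ![(X 0 : MvPolynomial (Fin 2) K), X 1] = X := by
    funext i; fin_cases i <;> rfl
  rw [hXid, aeval_X_left_apply] at h2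
  -- Step 3: one-variable polynomial g
  set g : Polynomial K := aeval ![Polynomial.X, (0 : Polynomial K)] D with hgdef
  have comp2 : ∀ (s : MvPolynomial (Fin 2) K),
      Polynomial.aeval s g = aeval ![s, 0] D := by
    intro s
    rw [hgdef, comp_aeval_apply]
    exact congrArg (fun u => aeval (R := K) u D)
      (funext fun i => by fin_cases i <;> simp)
  rw [← comp2 (X 0 + X 1), ← comp2 (X 1)] at h2
  -- h2 : D - aeval (X0+X1) g + aeval X1 g = 0
  have hD : D = Polynomial.aeval (X 0 + X 1 : MvPolynomial (Fin 2) K) g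
      - Polynomial.aeval (X 1 : MvPolynomial (Fin 2) K) g := by linear_combination h2
  -- Step 4: antiderivative
  set G : Polynomial K := pInteg g with hGdef
  have hG' : Polynomial.derivative G = g := pInteg_derivative g
  set B : MvPolynomial (Fin 2) K :=
    Polynomial.aeval (X 0 + X 1 : MvPolynomial (Fin 2) K) G
      - Polynomial.aeval (X 0 : MvPolynomial (Fin 2) K) G
      - Polynomial.aeval (X 1 : MvPolynomial (Fin 2) K) G with hBdef
  have f0 : pderiv (1:Fin 2) (X 0 : MvPolynomial (Fin 2) K) = 0 := pderiv_X_of_ne (by decide)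
  have f1 : pderiv (1:Fin 2) (X 1 : MvPolynomial (Fin 2) K) = 1 := pderiv_X_self 1
  have hpB : pderiv 1 B = D := by
    rw [hBdef, map_sub, map_sub,
      Derivation.comp_aeval_eq (X 0 + X 1) (pderiv 1) G,
      Derivation.comp_aeval_eq (X 0) (pderiv 1) G,
      Derivation.comp_aeval_eq (X 1) (pderiv 1) G, hG']
    rw [map_add, f0, f1, zero_add, hD]
    simp [smul_eq_mul]
  -- Step 5: P - B has zero derivative in the second variable and vanishes at X1 = 0
  have hzero : pderiv 1 (P - B) = 0 := by
    rw [map_sub, hpB, ← hDdef, sub_self]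
  have hfix := eq_of_pderiv_one_eq_zero (P - B) hzero
  have hsub : aeval (R := K) ![X 0, (0 : MvPolynomial (Fin 2) K)] (P - B) = 0 := by
    rw [map_sub, hu0, hBdef]
    simp only [map_sub]
    rw [← Polynomial.aeval_algHom_apply (aeval ![X 0, (0 : MvPolynomial (Fin 2) K)]) (X 0 + X 1) G,
        ← Polynomial.aeval_algHom_apply (aeval ![X 0, (0 : MvPolynomial (Fin 2) K)]) (X 0) G,
        ← Polynomial.aeval_algHom_apply (aeval ![X 0, (0 : MvPolynomial (Fin 2) K)]) (X 1) G]
    simp only [map_add, aeval_X, Matrix.cons_val_zero, Matrix.cons_val_one, Matrix.head_cons,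
      add_zero]
    rw [← Polynomial.coeff_zero_eq_aeval_zero' , pInteg_coeff_zero, map_zero]
    ring
  rw [hfix] at hsub
  refine ⟨G, pInteg_coeff_zero g, ?_⟩
  rw [← hBdef]
  linear_combination hsub
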